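/- Let E be a finite effect algebra with (pairwise distinct) atoms a_1,…,a_m and let A = (y_{it}) ∈ M(E) be an n×m matrix whose rows enumerate Seq(E). If there exist nonnegative real numbers s_1,…,s_m such that Σ_{t=1}^m y_{it} s_t = 1 for every 1 ≤ i ≤ n, then E has a state; namely, the map h defined by h(k_1 a_1 ⊕ … ⊕ k_m a_m) = Σ_{t=1}^m k_t s_t is a well-defined state on E. -/

import Mathlib

/-- An effect algebra: a set with 0, 1 and a partially defined binary
operation `⊕`, modeled as an `Option`-valued operation. -/
structure EffectAlgebra (E : Type*) where
  oplus : E → E → Option E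
  zero : E
  one : E
  comm : ∀ p q, oplus p q = oplus q p
  assoc : ∀ p q r s qr, oplus q r = some qr → oplus p qr = some s →
    ∃ pq, oplus p q = some pq ∧ oplus pq r = some s
  orthosupp : ∀ p, ∃! q, oplus p q = some one
  zero_unit : ∀ p q, oplus one p = some q → p = zero

namespace EffectAlgebra

variable {E : Type*}

/-- `p ≤ q` iff there is `r` with `p ⊕ r` defined and equal to `q`. -/
def le (W : EffectAlgebra E) (p q : E) : Prop := ∃ r, W.oplus p r = some q

/-- An atom is a minimal element of `E \ {0}`. -/
def IsAtomElem (W : EffectAlgebra E) (x : E) : Prop :=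
  x ≠ W.zero ∧ ∀ y : E, W.le y x → y ≠ W.zero → y = x

/-- Partial orthosum of a list of elements. -/
def listSum (W : EffectAlgebra E) : List E → Option E
  | [] => some W.zero
  | x :: xs => (listSum W xs).bind (fun y => W.oplus x y)

/-- The orthosum `k 0 • a 0 ⊕ ⋯ ⊕ k (m-1) • a (m-1)`, when defined. -/
def mulSum (W : EffectAlgebra E) {m : ℕ} (a : Fin m → E) (k : Fin m → ℕ) : Option E :=
  W.listSum ((List.ofFn (fun t => List.replicate (k t) (a t))).flatten)

/-- `Seq(E)`: tuples `k` with `⨁ k t • a t` defined and equal to `1`. -/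
def SeqSet (W : EffectAlgebra E) {m : ℕ} (a : Fin m → E) : Set (Fin m → ℕ) :=
  {k | W.mulSum a k = some W.one}

/-- `a : Fin m → E` enumerates the atoms of `E` without repetition. -/
def AtomFamily (W : EffectAlgebra E) {m : ℕ} (a : Fin m → E) : Prop :=
  Function.Injective a ∧ (∀ t, W.IsAtomElem (a t)) ∧
    ∀ x : E, W.IsAtomElem x → ∃ t, x = a t

/-- `A ∈ M(E)`: the rows of `A` are pairwise distinct and enumerate `Seq(E)`. -/
def MemM (W : EffectAlgebra E) {m n : ℕ} (a : Fin m → E) (A : Matrix (Fin n) (Fin m) ℕ) : Prop :=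
  (∀ i j : Fin n, i ≠ j → ∃ t, A i t ≠ A j t) ∧
    {k : Fin m → ℕ | ∃ i, A i = k} = W.SeqSet a

/-- A state on an effect algebra. -/
def IsState (W : EffectAlgebra E) (s : E → ℝ) : Prop :=
  (∀ x, 0 ≤ s x ∧ s x ≤ 1) ∧ s W.one = 1 ∧
    ∀ p q r, W.oplus p q = some r → s p + s q ≤ 1 ∧ s r = s p + s q

end EffectAlgebra

namespace EffectAlgebra

variable {E : Type*} (W : EffectAlgebra E)

lemma one_oplus_zero : W.oplus W.one W.zero = some W.one := by
  obtain ⟨q, hq, -⟩ := W.orthosupp W.one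
  have h := W.zero_unit q W.one hq
  rwa [h] at hq

lemma zero_oplus (x : E) : W.oplus W.zero x = some x := by
  obtain ⟨x', hx', -⟩ := W.orthosupp x
  have h01 : W.oplus W.zero W.one = some W.one := by rw [W.comm]; exact W.one_oplus_zero
  obtain ⟨pq, hpq, hpq'⟩ := W.assoc W.zero x x' W.one W.one hx' h01
  obtain ⟨q, -, huniq⟩ := W.orthosupp x'
  have h1 : pq = q := huniq pq (show W.oplus x' pq = some W.one by rw [W.comm]; exact hpq')
  have h2 : x = q := huniq x (show W.oplus x' x = some W.one by rw [W.comm]; exact hx')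
  rw [hpq, h1, ← h2]

lemma oplus_zero (x : E) : W.oplus x W.zero = some x := by
  rw [W.comm]; exact W.zero_oplus x

/-- Reverse associativity. -/
lemma assoc' (p q r s pq : E) (h1 : W.oplus p q = some pq) (h2 : W.oplus pq r = some s) :
    ∃ qr, W.oplus q r = some qr ∧ W.oplus p qr = some s := by
  obtain ⟨rq, hrq, hrq'⟩ := W.assoc r q p s pq (by rw [W.comm]; exact h1)
    (by rw [W.comm]; exact h2)
  exact ⟨rq, by rw [W.comm]; exact hrq, by rw [W.comm]; exact hrq'⟩

lemma cancel {x b c d : E} (hb : W.oplus x b = some d) (hc : W.oplus x c = some d) : b = c := by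
  obtain ⟨d', hd', -⟩ := W.orthosupp d
  obtain ⟨xd, hxd, hxd'⟩ := W.assoc' b x d' W.one d (by rw [W.comm]; exact hb) hd'
  obtain ⟨xd2, hxd2, hxd2'⟩ := W.assoc' c x d' W.one d (by rw [W.comm]; exact hc) hd'
  rw [hxd] at hxd2
  injection hxd2 with h; subst h
  obtain ⟨q, -, huniq⟩ := W.orthosupp xd
  rw [huniq b (show W.oplus xd b = some W.one by rw [W.comm]; exact hxd'), huniq c (show W.oplus xd c = some W.one by rw [W.comm]; exact hxd2')]

lemma eq_zero_of_oplus_eq_zero {p q : E} (h : W.oplus p q = some W.zero) : p = W.zero := by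
  obtain ⟨pq, hpq, -⟩ := W.assoc W.one p q W.one W.zero h W.one_oplus_zero
  exact W.zero_unit p pq hpq

lemma le_refl (x : E) : W.le x x := ⟨W.zero, W.oplus_zero x⟩

lemma le_trans {x y z : E} (h1 : W.le x y) (h2 : W.le y z) : W.le x z := by
  obtain ⟨r, hr⟩ := h1; obtain ⟨r', hr'⟩ := h2
  obtain ⟨rr, -, hrr'⟩ := W.assoc' x r r' z y hr hr'
  exact ⟨rr, hrr'⟩

lemma le_antisymm {x y : E} (h1 : W.le x y) (h2 : W.le y x) : x = y := by
  obtain ⟨r, hr⟩ := h1; obtain ⟨r', hr'⟩ := h2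
  obtain ⟨rr, hrr, hrr'⟩ := W.assoc' x r r' x y hr hr'
  have h0 : rr = W.zero := W.cancel hrr' (W.oplus_zero x)
  subst h0
  have hr0 : r = W.zero := W.eq_zero_of_oplus_eq_zero hrr
  subst hr0
  rw [W.oplus_zero x] at hr
  exact Option.some.inj hr

lemma swap_aux {x y z s : E}
    (h : (W.oplus y z).bind (fun w => W.oplus x w) = some s) :
    (W.oplus x z).bind (fun w => W.oplus y w) = some s := by
  obtain ⟨yz, hyz, hx⟩ := Option.bind_eq_some_iff.mp h
  obtain ⟨xy, hxy, hxy'⟩ := W.assoc x y z s yz hyz hx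
  obtain ⟨xz, hxz, hxz'⟩ := W.assoc' y x z s xy (by rw [W.comm]; exact hxy) hxy'
  rw [hxz, Option.bind_some]
  exact hxz'

lemma listSum_perm {L L' : List E} (h : L.Perm L') : W.listSum L = W.listSum L' := by
  induction h with
  | nil => rfl
  | cons x h ih => simp only [listSum, ih]
  | swap x y l =>
    show ((W.listSum l).bind (fun w => W.oplus x w)).bind (fun w => W.oplus y w)
       = ((W.listSum l).bind (fun w => W.oplus y w)).bind (fun w => W.oplus x w)
    cases hl : W.listSum l with
    | none => rfl
    | some z =>
      simp only [Option.bind_some]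
      cases h1 : (W.oplus x z).bind (fun w => W.oplus y w) with
      | none =>
        cases h2 : (W.oplus y z).bind (fun w => W.oplus x w) with
        | none => rfl
        | some s => exact absurd h1 (by rw [W.swap_aux h2]; simp)
      | some s =>
        exact (W.swap_aux h1).symm
  | trans _ _ ih1 ih2 => rw [ih1, ih2]

lemma listSum_append {L1 L2 : List E} {x y z : E}
    (h1 : W.listSum L1 = some x) (h2 : W.listSum L2 = some y) (h3 : W.oplus x y = some z) :
    W.listSum (L1 ++ L2) = some z := by
  induction L1 generalizing x z with
  | nil =>
    simp only [listSum] at h1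
    injection h1 with h1; subst h1
    rw [W.zero_oplus] at h3
    injection h3 with h3; subst h3
    simpa using h2
  | cons b L1 ih =>
    simp only [listSum] at h1
    obtain ⟨x1, hx1, hbx1⟩ := Option.bind_eq_some_iff.mp h1
    obtain ⟨x1y, hx1y, hbz⟩ := W.assoc' b x1 y z x hbx1 h3
    show (W.listSum (L1 ++ L2)).bind (fun w => W.oplus b w) = some z
    rw [ih hx1 hx1y, Option.bind_some]
    exact hbz

lemma listSum_append_inv {L1 L2 : List E} {z : E} (h : W.listSum (L1 ++ L2) = some z) :
    ∃ x y, W.listSum L1 = some x ∧ W.listSum L2 = some y ∧ W.oplus x y = some z := by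
  induction L1 generalizing z with
  | nil => exact ⟨W.zero, z, rfl, by simpa using h, W.zero_oplus z⟩
  | cons b L1 ih =>
    simp only [List.cons_append, listSum] at h
    obtain ⟨w, hw, hbw⟩ := Option.bind_eq_some_iff.mp h
    obtain ⟨x1, y, hx1, hy, hx1y⟩ := ih hw
    obtain ⟨bx1, hbx1, hbz⟩ := W.assoc b x1 y z w hx1y hbw
    refine ⟨bx1, y, ?_, hy, hbz⟩
    show (W.listSum L1).bind (fun w => W.oplus b w) = some bx1
    rw [hx1, Option.bind_some]
    exact hbx1

lemma flatten_ofFn_append_perm {α : Type*} : ∀ {m : ℕ} (f g : Fin m → List α),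
    (List.ofFn (fun t => f t ++ g t)).flatten.Perm
      ((List.ofFn f).flatten ++ (List.ofFn g).flatten) := by
  intro m
  induction m with
  | zero => intro f g; simp
  | succ m ih =>
    intro f g
    simp only [List.ofFn_succ, List.flatten_cons]
    refine ((ih _ _).append_left _).trans ?_
    simp only [List.append_assoc]
    exact (List.perm_append_comm_assoc _ _ _).append_left _

lemma mulSum_add {m : ℕ} {a : Fin m → E} {k k' : Fin m → ℕ} {x y z : E}
    (h1 : W.mulSum a k = some x) (h2 : W.mulSum a k' = some y) (h3 : W.oplus x y = some z) :
    W.mulSum a (k + k') = some z := by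
  unfold mulSum at *
  have he : (fun t => List.replicate ((k + k') t) (a t))
      = fun t => List.replicate (k t) (a t) ++ List.replicate (k' t) (a t) := by
    funext t
    show List.replicate (k t + k' t) (a t) = _
    exact List.replicate_add _ _ _
  rw [he, W.listSum_perm (flatten_ofFn_append_perm _ _)]
  exact W.listSum_append h1 h2 h3

lemma mulSum_zero {m : ℕ} (a : Fin m → E) : W.mulSum a 0 = some W.zero := by
  have h : (List.ofFn fun t => List.replicate ((0 : Fin m → ℕ) t) (a t)).flatten = [] := by
    simp only [Pi.zero_apply, List.replicate_zero, List.ofFn_const]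
    simp
  rw [mulSum, h]; rfl

lemma flatten_ofFn_eq_single {α : Type*} : ∀ {m : ℕ} (L : Fin m → List α) (t : Fin m),
    (∀ u, u ≠ t → L u = []) → (List.ofFn L).flatten = L t := by
  intro m
  induction m with
  | zero => exact fun L t => t.elim0
  | succ m ih =>
    intro L t h
    rw [List.ofFn_succ, List.flatten_cons]
    rcases Fin.eq_zero_or_eq_succ t with rfl | ⟨u, rfl⟩
    · have hz : ∀ i : Fin m, L i.succ = [] := fun i => h i.succ (Fin.succ_ne_zero i)
      simp [hz]
    · rw [h 0 (Fin.succ_ne_zero u).symm, List.nil_append]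
      exact ih _ u (fun v hv => h v.succ (fun hc => hv (Fin.succ_injective _ hc)))

lemma mulSum_single {m : ℕ} (a : Fin m → E) (t : Fin m) :
    W.mulSum a (Pi.single t 1) = some (a t) := by
  rw [mulSum, flatten_ofFn_eq_single _ t (by intro u hu; simp [Pi.single_apply, hu])]
  simp [listSum, Pi.single_eq_same, W.oplus_zero]

lemma exists_decomp [Fintype E] {m : ℕ} {a : Fin m → E} (ha : W.AtomFamily a) (x : E) :
    ∃ k, W.mulSum a k = some x := by
  classical
  set μ : E → ℕ := fun y => (Finset.univ.filter (fun z => W.le z y)).card with hμ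
  have hmono : ∀ {y z : E}, W.le y z →
      Finset.univ.filter (fun w => W.le w y) ⊆ Finset.univ.filter (fun w => W.le w z) := by
    intro y z h w hw
    simp only [Finset.mem_filter, Finset.mem_univ, true_and] at hw ⊢
    exact W.le_trans hw h
  have hlt : ∀ {y z : E}, W.le y z → y ≠ z → μ y < μ z := by
    intro y z h hne
    apply Finset.card_lt_card
    refine ⟨hmono h, fun hsub => hne ?_⟩
    have hz : z ∈ Finset.univ.filter (fun w => W.le w y) := hsub (by
      simp only [Finset.mem_filter, Finset.mem_univ, true_and]; exact W.le_refl z)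
    simp only [Finset.mem_filter, Finset.mem_univ, true_and] at hz
    exact W.le_antisymm h hz
  have main : ∀ N, ∀ x : E, μ x ≤ N → ∃ k, W.mulSum a k = some x := by
    intro N
    induction N with
    | zero =>
      intro x hx
      exfalso
      have hxm : x ∈ Finset.univ.filter (fun w => W.le w x) := by
        simp only [Finset.mem_filter, Finset.mem_univ, true_and]; exact W.le_refl x
      have h2 : 0 < μ x := by
        simp only [hμ]
        exact Finset.card_pos.mpr ⟨x, hxm⟩
      omega
    | succ N ih =>
      intro x hx
      by_cases h0 : x = W.zero
      · exact ⟨0, h0 ▸ W.mulSum_zero a⟩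
      · -- find an atom below x
        have hSne : (Finset.univ.filter (fun z => z ≠ W.zero ∧ W.le z x)).Nonempty :=
          ⟨x, by simp only [Finset.mem_filter, Finset.mem_univ, true_and]
                 exact ⟨h0, W.le_refl x⟩⟩
        obtain ⟨y, hyS, hymin⟩ := Finset.exists_min_image _ μ hSne
        simp only [Finset.mem_filter, Finset.mem_univ, true_and] at hyS
        obtain ⟨hy0, hyx⟩ := hyS
        have hatom : W.IsAtomElem y := by
          refine ⟨hy0, fun z hzy hz0 => ?_⟩
          by_contra hne
          have hzS : z ∈ Finset.univ.filter (fun z => z ≠ W.zero ∧ W.le z x) := by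
            simp only [Finset.mem_filter, Finset.mem_univ, true_and]
            exact ⟨hz0, W.le_trans hzy hyx⟩
          exact absurd (hymin z hzS) (by simpa using hlt hzy hne)
        obtain ⟨t, hyt⟩ := ha.2.2 y hatom
        obtain ⟨r, hr⟩ := hyx
        have hrx : W.le r x := ⟨y, by rw [W.comm]; exact hr⟩
        have hrne : r ≠ x := by
          intro hre; subst hre
          exact hy0 (W.cancel (b := y) (c := W.zero) (by rw [W.comm]; exact hr) (W.oplus_zero r))
        have hμr : μ r ≤ N := by have := hlt hrx hrne; omega
        obtain ⟨kr, hkr⟩ := ih r hμr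
        refine ⟨kr + Pi.single t 1, W.mulSum_add hkr (W.mulSum_single a t) ?_⟩
        rw [W.comm, ← hyt]
        exact hr
  exact main (μ x) x le_rfl

end EffectAlgebra

/-- `(A|1)`: the matrix `A` augmented by a column of ones. -/
def augmentOnes {n m : ℕ} {R : Type*} [One R] (A : Matrix (Fin n) (Fin m) R) :
    Matrix (Fin n) (Fin (m + 1)) R :=
  Matrix.of fun i j => if h : (j : ℕ) < m then A i ⟨j, h⟩ else 1

/-- If `A·s = 1` has a nonnegative real solution then `E` has a state,
namely `h (⨁ k t • a t) = ∑ t, k t * s t`. -/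
theorem state_of_solution {E : Type*} [Fintype E] (W : EffectAlgebra E)
    {m n : ℕ} (a : Fin m → E) (ha : W.AtomFamily a)
    (A : Matrix (Fin n) (Fin m) ℕ) (hA : W.MemM a A)
    (s : Fin m → ℝ) (hs : ∀ t, 0 ≤ s t)
    (hsol : ∀ i : Fin n, ∑ t : Fin m, (A i t : ℝ) * s t = 1) :
    ∃ h : E → ℝ, W.IsState h ∧
      ∀ (k : Fin m → ℕ) (x : E), W.mulSum a k = some x →
        h x = ∑ t : Fin m, (k t : ℝ) * s t := by
  classical
  have hdec : ∀ x : E, ∃ k, W.mulSum a k = some x := W.exists_decomp ha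
  choose K hK using hdec
  have hseq : ∀ k : Fin m → ℕ, W.mulSum a k = some W.one → ∑ t, (k t : ℝ) * s t = 1 := by
    intro k hk
    have hmem : k ∈ W.SeqSet a := hk
    rw [← hA.2] at hmem
    obtain ⟨i, hi⟩ := hmem
    rw [← hi]
    exact hsol i
  have hwd : ∀ (k k' : Fin m → ℕ) (x : E), W.mulSum a k = some x → W.mulSum a k' = some x →
      ∑ t, (k t : ℝ) * s t = ∑ t, (k' t : ℝ) * s t := by
    intro k k' x hk hk'
    obtain ⟨x', hx', -⟩ := W.orthosupp x
    have h1 := hseq _ (W.mulSum_add hk (hK x') hx')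
    have h2 := hseq _ (W.mulSum_add hk' (hK x') hx')
    simp only [Pi.add_apply, Nat.cast_add, add_mul, Finset.sum_add_distrib] at h1 h2
    linarith
  have hnn : ∀ x : E, 0 ≤ ∑ t, (K x t : ℝ) * s t := fun x =>
    Finset.sum_nonneg fun t _ => mul_nonneg (Nat.cast_nonneg _) (hs t)
  have hbound : ∀ x : E, ∑ t, (K x t : ℝ) * s t ≤ 1 := by
    intro x
    obtain ⟨x', hx', -⟩ := W.orthosupp x
    have h1 := hseq _ (W.mulSum_add (hK x) (hK x') hx')
    simp only [Pi.add_apply, Nat.cast_add, add_mul, Finset.sum_add_distrib] at h1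
    have := hnn x'
    linarith
  refine ⟨fun x => ∑ t, (K x t : ℝ) * s t, ⟨fun x => ⟨hnn x, hbound x⟩, ?_, ?_⟩, ?_⟩
  · exact hseq _ (hK W.one)
  · intro p q r hpq
    have hr := W.mulSum_add (hK p) (hK q) hpq
    have e := hwd (K r) (K p + K q) r (hK r) hr
    simp only [Pi.add_apply, Nat.cast_add, add_mul, Finset.sum_add_distrib] at e
    constructor
    · rw [← e]; exact hbound r
    · exact e
  · intro k x hk
    exact hwd (K x) k x (hK x) hk
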